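/- Let K be a field and α ∈ K((T)) with a continued fraction datum (αₙ, aₙ) and canonical convergents (pₙ, qₙ). Then for every n ≥ 0, orderTop(ι pₙ − α·ι qₙ) = deg qₙ₊₁ = deg aₙ₊₁ + deg qₙ. In particular orderTop(ι pₙ − α·ι qₙ) > deg qₙ, so (pₙ, qₙ) is a convergent of α. -/

import Mathlib

open Polynomial

/-- The ring homomorphism `K[X] → K((T))` sending `X` to `T⁻¹`. -/
noncomputable def iota {K : Type*} [Field K] : Polynomial K →+* LaurentSeries K :=
  Polynomial.eval₂RingHom (HahnSeries.C : K →+* LaurentSeries K)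
    (HahnSeries.single (-1 : ℤ) (1 : K))

/-- The canonical convergents of a continued fraction expansion satisfy
`orderTop (ι pₙ - α ι qₙ) = deg qₙ₊₁ = deg aₙ₊₁ + deg qₙ > deg qₙ`;
in particular they are convergents of `α`. -/
lemma iota_C_mul_X_pow {K : Type*} [Field K] (c : K) (n : ℕ) :
    iota (C c * X ^ n) = HahnSeries.single (-(n : ℤ)) c := by
  simp only [iota, map_mul, map_pow, coe_eval₂RingHom, eval₂_C, eval₂_X,
    HahnSeries.single_pow, HahnSeries.C_apply, HahnSeries.single_mul_single]
  norm_num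

lemma orderTop_iota_aux {K : Type*} [Field K] (n : ℕ) : ∀ (f : Polynomial K),
    f.natDegree = n → f ≠ 0 →
    (iota f).orderTop = ((-(f.natDegree : ℤ) : ℤ) : WithTop ℤ) := by
  induction n using Nat.strong_induction_on with
  | _ n IH =>
  intro f hn hf
  conv_lhs => rw [← f.eraseLead_add_C_mul_X_pow, map_add, iota_C_mul_X_pow]
  by_cases he : f.eraseLead = 0
  · rw [he, map_zero, zero_add, HahnSeries.orderTop_single (leadingCoeff_ne_zero.mpr hf)]
  · have hlt : f.eraseLead.natDegree < f.natDegree := by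
      rcases f.eraseLead_natDegree_lt_or_eraseLead_eq_zero with h | h
      · exact h
      · exact absurd h he
    subst hn
    rw [HahnSeries.orderTop_add_eq_right, HahnSeries.orderTop_single (leadingCoeff_ne_zero.mpr hf)]
    rw [IH _ hlt _ rfl he, HahnSeries.orderTop_single (leadingCoeff_ne_zero.mpr hf)]
    exact_mod_cast (by omega : -(f.natDegree : ℤ) < -(f.eraseLead.natDegree : ℤ))

lemma orderTop_iota {K : Type*} [Field K] {f : Polynomial K} (hf : f ≠ 0) :
    (iota f).orderTop = ((-(f.natDegree : ℤ) : ℤ) : WithTop ℤ) :=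
  orderTop_iota_aux _ f rfl hf

lemma iota_ne_zero {K : Type*} [Field K] {f : Polynomial K} (hf : f ≠ 0) : iota f ≠ 0 := by
  rw [← HahnSeries.orderTop_ne_top, orderTop_iota hf]
  exact WithTop.coe_ne_top

lemma order_iota {K : Type*} [Field K] {f : Polynomial K} (hf : f ≠ 0) :
    (iota f).order = -(f.natDegree : ℤ) := by
  have := orderTop_iota hf
  rw [← HahnSeries.order_eq_orderTop_of_ne_zero (iota_ne_zero hf)] at this
  exact_mod_cast this

theorem canonical_convergents_approximation_quality {K : Type*} [Field K]
    (α : LaurentSeries K)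
    (A : ℕ → LaurentSeries K) (a : ℕ → Polynomial K)
    (h0 : A 0 = α)
    (hfrac : ∀ n, 0 < (A n - iota (a n)).orderTop ∧ A (n + 1) * (A n - iota (a n)) = 1)
    (p q : ℕ → Polynomial K)
    (hp0 : p 0 = a 0) (hq0 : q 0 = 1)
    (hp1 : p 1 = a 1 * a 0 + 1) (hq1 : q 1 = a 1)
    (hprec : ∀ n, p (n + 2) = a (n + 2) * p (n + 1) + p n)
    (hqrec : ∀ n, q (n + 2) = a (n + 2) * q (n + 1) + q n) :
    ∀ n : ℕ,
      (iota (p n) - α * iota (q n)).orderTop = ((q (n + 1)).natDegree : WithTop ℤ) ∧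
      (q (n + 1)).natDegree = (a (n + 1)).natDegree + (q n).natDegree ∧
      ((q n).natDegree : WithTop ℤ) < (iota (p n) - α * iota (q n)).orderTop := by
  set E : ℕ → LaurentSeries K := fun n => iota (p n) - α * iota (q n) with hE
  -- basic nonvanishing
  have hxne : ∀ n, A n - iota (a n) ≠ 0 := fun n h => by
    have := (hfrac n).2; rw [h, mul_zero] at this; exact zero_ne_one this
  have hAne : ∀ n, A (n + 1) ≠ 0 := fun n h => by
    have := (hfrac n).2; rw [h, zero_mul] at this; exact zero_ne_one this
  set d : ℕ → ℤ := fun n => (A n - iota (a n)).order with hd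
  have hdn : ∀ n, d n = (A n - iota (a n)).order := fun n => rfl
  have hd_pos : ∀ n, 0 < d n := by
    intro n
    have := (hfrac n).1
    rw [← HahnSeries.order_eq_orderTop_of_ne_zero (hxne n)] at this
    rw [hdn]
    exact_mod_cast this
  have hAord : ∀ n, (A (n + 1)).order = -(d n) := by
    intro n
    have h := congrArg HahnSeries.order (hfrac n).2
    rw [HahnSeries.order_mul (hAne n) (hxne n), HahnSeries.order_one] at h
    rw [hdn]
    omega
  -- degree of partial quotients
  have hdeg : ∀ n, ((a (n + 1)).natDegree : ℤ) = d n := by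
    intro n
    have hApos : (A (n + 1)).orderTop = ((-(d n) : ℤ) : WithTop ℤ) := by
      rw [← HahnSeries.order_eq_orderTop_of_ne_zero (hAne n), hAord n]
    have hane : a (n + 1) ≠ 0 := by
      intro h
      have := (hfrac (n + 1)).1
      rw [h, map_zero, sub_zero, hApos] at this
      have : (0 : ℤ) < -(d n) := by exact_mod_cast this
      have := hd_pos n; omega
    have hio : (iota (a (n + 1))).orderTop = (A (n + 1)).orderTop := by
      have : iota (a (n + 1)) = A (n + 1) - (A (n + 1) - iota (a (n + 1))) := by ring
      rw [this, HahnSeries.orderTop_sub]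
      rw [hApos]
      calc ((-(d n) : ℤ) : WithTop ℤ) < ((0 : ℤ) : WithTop ℤ) := by
            exact_mod_cast (by have := hd_pos n; omega : -(d n) < (0 : ℤ))
        _ ≤ _ := le_of_lt (by exact_mod_cast (hfrac (n + 1)).1)
    rw [orderTop_iota hane, hApos] at hio
    have : -((a (n + 1)).natDegree : ℤ) = -(d n) := by exact_mod_cast hio
    omega
  have hd1 : ∀ n, 1 ≤ (a (n + 1)).natDegree := by
    intro n; have := hdeg n; have := hd_pos n; omega
  have hane : ∀ n, a (n + 1) ≠ 0 := by
    intro n h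
    have := hd1 n; rw [h] at this; simp at this
  -- key identity E (n+1) * A (n+2) = -(E n)
  have hE0 : E 0 * A 1 = -1 := by
    have h := (hfrac 0).2
    rw [h0] at h
    simp only [hE, hp0, hq0, map_one]
    linear_combination -h
  have hEstep : ∀ n, E (n + 1) * A (n + 2) = -(E n) := by
    intro n
    induction n with
    | zero =>
      have h0' := (hfrac 0).2
      rw [h0] at h0'
      have h1' := (hfrac 1).2
      simp only [hE, hp0, hq0, hp1, hq1, map_one, map_add, map_mul]
      linear_combination (α - iota (a 0)) * h1' - A 2 * h0'
    | succ n IH =>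
      have hr := (hfrac (n + 2)).2
      simp only [hE, hprec n, hqrec n, map_add, map_mul] at IH ⊢
      linear_combination A (n + 3) * IH -
        (iota (p (n + 1)) - α * iota (q (n + 1))) * hr
  -- E n ≠ 0 and its order
  have hEne : ∀ n, E n ≠ 0 := by
    intro n
    induction n with
    | zero =>
      intro h; rw [h, zero_mul] at hE0
      exact one_ne_zero (neg_eq_zero.mp hE0.symm)
    | succ n IH =>
      intro h
      have hs := hEstep n
      rw [h, zero_mul] at hs
      exact IH (neg_eq_zero.mp hs.symm)
  have hEord0 : (E 0).order = d 0 := by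
    have h := congrArg HahnSeries.order hE0
    rw [HahnSeries.order_mul (hEne 0) (hAne 0), hAord 0] at h
    have : (-1 : LaurentSeries K).order = 0 := by
      rw [HahnSeries.order_neg, HahnSeries.order_one]
    rw [this] at h
    omega
  have hEordS : ∀ n, (E (n + 1)).order = (E n).order + d (n + 1) := by
    intro n
    have h := congrArg HahnSeries.order (hEstep n)
    rw [HahnSeries.order_mul (hEne (n + 1)) (hAne (n + 1)), hAord (n + 1),
      HahnSeries.order_neg] at h
    omega
  -- degrees of q
  have hqfact : ∀ n, q n ≠ 0 ∧ q (n + 1) ≠ 0 ∧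
      (q (n + 1)).natDegree = (a (n + 1)).natDegree + (q n).natDegree := by
    intro n
    induction n with
    | zero =>
      refine ⟨by rw [hq0]; exact one_ne_zero, by rw [hq1]; exact hane 0, ?_⟩
      rw [hq0, hq1, natDegree_one, add_zero]
    | succ n IH =>
      obtain ⟨hqn, hqn1, hdq⟩ := IH
      have hmul : (a (n + 2) * q (n + 1)).natDegree
          = (a (n + 2)).natDegree + (q (n + 1)).natDegree :=
        natDegree_mul (hane (n + 1)) hqn1
      have hlt : (q n).natDegree < (a (n + 2) * q (n + 1)).natDegree := by
        rw [hmul, hdq]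
        have := hd1 n
        have := hd1 (n + 1)
        omega
      have hdq2 : (q (n + 2)).natDegree
          = (a (n + 2)).natDegree + (q (n + 1)).natDegree := by
        rw [hqrec n, natDegree_add_eq_left_of_natDegree_lt hlt, hmul]
      refine ⟨hqn1, ?_, hdq2⟩
      intro h
      rw [h, natDegree_zero] at hdq2
      have := hd1 (n + 1)
      omega
  -- order of E n equals degree of q (n+1)
  have hEq : ∀ n, (E n).order = ((q (n + 1)).natDegree : ℤ) := by
    intro n
    induction n with
    | zero =>
      rw [hEord0, ← hdeg 0, hq1]
    | succ n IH =>
      rw [hEordS n, IH, ← hdeg (n + 1), (hqfact (n + 1)).2.2]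
      push_cast
      ring
  -- conclusion
  intro n
  have hoT : (E n).orderTop = ((q (n + 1)).natDegree : WithTop ℤ) := by
    rw [← HahnSeries.order_eq_orderTop_of_ne_zero (hEne n), hEq n]
    norm_cast
  refine ⟨hoT, (hqfact n).2.2, ?_⟩
  rw [hoT]
  have h1 := hd1 n
  have h2 := (hqfact n).2.2
  exact_mod_cast (by omega : ((q n).natDegree : ℤ) < ((q (n + 1)).natDegree : ℤ))
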